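/- Let φ : g → g' be a homomorphism of Lie superalgebras, and let (p, P) and (p', P') be ℤ-coverings of g and g' respectively. Then there exists a unique ℤ-graded Lie superalgebra homomorphism φ̃ : p → p' such that P' ∘ φ̃ = φ ∘ P. -/

import Mathlib

open scoped TensorProduct

/-- The sign `(-1)^(i*j)` for integer degrees `i j`. -/
def ssign (i j : ℤ) : ℤ := if Even (i * j) then 1 else -1

/-- A Lie superalgebra structure on a `K`-vector space `g`. -/
structure LieSuperAlgebra (K : Type*) [Field K] (g : Type*) [AddCommGroup g] [Module K g] where
  grading : ZMod 2 → Submodule K g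
  isInternal : DirectSum.IsInternal grading
  bracket : g →ₗ[K] g →ₗ[K] g
  bracket_mem : ∀ (i j : ZMod 2) (x y : g), x ∈ grading i → y ∈ grading j →
    bracket x y ∈ grading (i + j)
  super_antisymm : ∀ (i j : ZMod 2) (x y : g), x ∈ grading i → y ∈ grading j →
    bracket x y = (-((-1 : ℤ) ^ (i.val * j.val))) • bracket y x
  super_jacobi : ∀ (i j : ZMod 2) (x y z : g), x ∈ grading i → y ∈ grading j →
    bracket x (bracket y z) =
      bracket (bracket x y) z + ((-1 : ℤ) ^ (i.val * j.val)) • bracket y (bracket x z)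

/-- A ℤ-graded Lie superalgebra with parity-matched grading. -/
structure ZGradedLieSuperAlgebra (K : Type*) [Field K] (p : Type*)
    [AddCommGroup p] [Module K p] where
  grading : ℤ → Submodule K p
  isInternal : DirectSum.IsInternal grading
  bracket : p →ₗ[K] p →ₗ[K] p
  bracket_mem : ∀ (i j : ℤ) (x y : p), x ∈ grading i → y ∈ grading j →
    bracket x y ∈ grading (i + j)
  super_antisymm : ∀ (i j : ℤ) (x y : p), x ∈ grading i → y ∈ grading j →
    bracket x y = (-(ssign i j)) • bracket y x
  super_jacobi : ∀ (i j : ℤ) (x y z : p), x ∈ grading i → y ∈ grading j →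
    bracket x (bracket y z) =
      bracket (bracket x y) z + (ssign i j) • bracket y (bracket x z)

variable {K : Type*} [Field K]
variable {g g' g'' p p' p'' a a' : Type*}
  [AddCommGroup g] [Module K g] [AddCommGroup g'] [Module K g']
  [AddCommGroup g''] [Module K g'']
  [AddCommGroup p] [Module K p] [AddCommGroup p'] [Module K p']
  [AddCommGroup p''] [Module K p'']
  [AddCommGroup a] [Module K a] [AddCommGroup a'] [Module K a']

/-- An (even) homomorphism of Lie superalgebras. -/
def IsSuperHom (G : LieSuperAlgebra K g) (G' : LieSuperAlgebra K g') (f : g →ₗ[K] g') : Prop :=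
  (∀ (i : ZMod 2) (x : g), x ∈ G.grading i → f x ∈ G'.grading i) ∧
  ∀ x y : g, f (G.bracket x y) = G'.bracket (f x) (f y)

/-- A ℤ-graded homomorphism of ℤ-graded Lie superalgebras. -/
def IsZGradedHom (P : ZGradedLieSuperAlgebra K p) (P' : ZGradedLieSuperAlgebra K p')
    (f : p →ₗ[K] p') : Prop :=
  (∀ (s : ℤ) (x : p), x ∈ P.grading s → f x ∈ P'.grading s) ∧
  ∀ x y : p, f (P.bracket x y) = P'.bracket (f x) (f y)

/-- A homomorphism from a ℤ-graded Lie superalgebra to a Lie superalgebra: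
an even linear map preserving brackets, sending degree `s` into parity `s mod 2`. -/
def IsHomToSuper (P : ZGradedLieSuperAlgebra K p) (G : LieSuperAlgebra K g)
    (f : p →ₗ[K] g) : Prop :=
  (∀ (s : ℤ) (x : p), x ∈ P.grading s → f x ∈ G.grading (s : ZMod 2)) ∧
  ∀ x y : p, f (P.bracket x y) = G.bracket (f x) (f y)

/-- `(P, π)` is a ℤ-covering of the Lie superalgebra `G`: a homomorphism restricting to a
bijection `p_s → g_{s̄}` for every `s : ℤ`. -/
def IsZCovering (G : LieSuperAlgebra K g) (P : ZGradedLieSuperAlgebra K p)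
    (π : p →ₗ[K] g) : Prop :=
  IsHomToSuper P G π ∧
  ∀ s : ℤ, Set.BijOn π (P.grading s : Set p) (G.grading (s : ZMod 2) : Set g)

/-- `(P, π)` is a ℤ^{≥0}-covering of the Lie superalgebra `G`. -/
def IsZNonnegCovering (G : LieSuperAlgebra K g) (P : ZGradedLieSuperAlgebra K p)
    (π : p →ₗ[K] g) : Prop :=
  IsHomToSuper P G π ∧ (∀ s : ℤ, s < 0 → P.grading s = ⊥) ∧
  ∀ s : ℤ, 0 ≤ s → Set.BijOn π (P.grading s : Set p) (G.grading (s : ZMod 2) : Set g)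

/-- The bijection `p_s ≃ g_{s̄}` coming from a ℤ-covering. -/
noncomputable def coverEquiv (G : LieSuperAlgebra K g) (P : ZGradedLieSuperAlgebra K p)
    (π : p →ₗ[K] g) (hcov : IsZCovering G P π) (s : ℤ) :
    P.grading s ≃ₗ[K] G.grading (s : ZMod 2) :=
  LinearEquiv.ofBijective (π.restrict (hcov.1.1 s)) (by
    constructor
    · intro x y h
      exact Subtype.ext ((hcov.2 s).injOn x.2 y.2 (congrArg Subtype.val h))
    · rintro ⟨y, hy⟩
      obtain ⟨x, hx, hxy⟩ := (hcov.2 s).surjOn hy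
      exact ⟨⟨x, hx⟩, Subtype.ext hxy⟩)

@[simp] lemma coverEquiv_apply (G : LieSuperAlgebra K g) (P : ZGradedLieSuperAlgebra K p)
    (π : p →ₗ[K] g) (hcov : IsZCovering G P π) (s : ℤ) (x : P.grading s) :
    (coverEquiv G P π hcov s x : g) = π x := rfl

/-- a homomorphism `φ : g → g'` of Lie superalgebras lifts to a unique
ℤ-graded homomorphism `φ̃` of the ℤ-coverings with `π' ∘ φ̃ = φ ∘ π`. -/
theorem zCovering_lift_of_hom
    (G : LieSuperAlgebra K g) (G' : LieSuperAlgebra K g')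
    (P : ZGradedLieSuperAlgebra K p) (π : p →ₗ[K] g) (hcov : IsZCovering G P π)
    (P' : ZGradedLieSuperAlgebra K p') (π' : p' →ₗ[K] g') (hcov' : IsZCovering G' P' π')
    (φ : g →ₗ[K] g') (hφ : IsSuperHom G G' φ) :
    ∃! f : p →ₗ[K] p', IsZGradedHom P P' f ∧ π'.comp f = φ.comp π := by
  classical
  set ρ := fun s => coverEquiv G P π hcov s with hρ
  set ρ' := fun s => coverEquiv G' P' π' hcov' s with hρ'
  set φres : ∀ s : ℤ, G.grading (s : ZMod 2) →ₗ[K] G'.grading (s : ZMod 2) :=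
    fun s => φ.restrict (hφ.1 (s : ZMod 2)) with hφres
  set cmp : ∀ s : ℤ, P.grading s →ₗ[K] P'.grading s := fun s =>
    ((ρ' s).symm.toLinearMap.comp ((φres s).comp (ρ s).toLinearMap)) with hcmp
  set decomp : p ≃ₗ[K] DirectSum ℤ (fun s => P.grading s) :=
    (LinearEquiv.ofBijective (DirectSum.coeLinearMap P.grading) P.isInternal).symm with hdecomp
  set F : p →ₗ[K] p' :=
    (DirectSum.toModule K ℤ p' (fun s => (P'.grading s).subtype.comp (cmp s))).comp
      decomp.toLinearMap with hFdef
  have hF : ∀ (s : ℤ) (x : p) (hx : x ∈ P.grading s), F x = (cmp s ⟨x, hx⟩ : p') := by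
    intro s x hx
    have hd : decomp x = DirectSum.lof K ℤ (fun s => P.grading s) s ⟨x, hx⟩ := by
      rw [hdecomp, LinearEquiv.symm_apply_eq]
      show x = DirectSum.coeLinearMap P.grading (DirectSum.lof K ℤ (fun s => P.grading s) s ⟨x, hx⟩)
      rw [DirectSum.lof_eq_of, DirectSum.coeLinearMap_of]
    show (DirectSum.toModule K ℤ p' (fun s => (P'.grading s).subtype.comp (cmp s)))
        (decomp x) = _
    rw [hd, DirectSum.toModule_lof]
    rfl
  have hFmem : ∀ (s : ℤ) (x : p), x ∈ P.grading s → F x ∈ P'.grading s := by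
    intro s x hx
    rw [hF s x hx]
    exact (cmp s ⟨x, hx⟩).2
  have hπ'F : ∀ (s : ℤ) (x : p), x ∈ P.grading s → π' (F x) = φ (π x) := by
    intro s x hx
    rw [hF s x hx]
    have h1 : π' ((cmp s ⟨x, hx⟩ : P'.grading s) : p')
        = ((ρ' s) ((ρ' s).symm (φres s (ρ s ⟨x, hx⟩))) : g') := rfl
    rw [h1, (ρ' s).apply_symm_apply]
    rfl
  have hTop : (⨆ s, P.grading s) = ⊤ := P.isInternal.submodule_iSup_eq_top
  have hmemTop : ∀ x : p, x ∈ ⨆ s, P.grading s := fun x => hTop ▸ Submodule.mem_top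
  have hcomp : π'.comp F = φ.comp π := by
    ext x
    show π' (F x) = φ (π x)
    refine Submodule.iSup_induction (motive := fun x => π' (F x) = φ (π x)) _ (hmemTop x)
      (fun s x hx => hπ'F s x hx) (by simp) ?_
    intro a b ha hb
    simp [map_add, ha, hb]
  have hπ'Fall : ∀ x : p, π' (F x) = φ (π x) := fun x => LinearMap.congr_fun hcomp x
  have hbr : ∀ x y : p, F (P.bracket x y) = P'.bracket (F x) (F y) := by
    have core : ∀ (i : ℤ) (x : p), x ∈ P.grading i → ∀ (j : ℤ) (y : p), y ∈ P.grading j →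
        F (P.bracket x y) = P'.bracket (F x) (F y) := by
      intro i x hx j y hy
      have h1 : P.bracket x y ∈ P.grading (i + j) := P.bracket_mem i j x y hx hy
      have m1 : F (P.bracket x y) ∈ P'.grading (i + j) := hFmem _ _ h1
      have m2 : P'.bracket (F x) (F y) ∈ P'.grading (i + j) :=
        P'.bracket_mem i j _ _ (hFmem i x hx) (hFmem j y hy)
      refine (hcov'.2 (i + j)).injOn m1 m2 ?_
      show π' (F (P.bracket x y)) = π' (P'.bracket (F x) (F y))
      rw [hπ'Fall, hcov.1.2, hφ.2, ← hπ'Fall x, ← hπ'Fall y, ← hcov'.1.2]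
    intro x y
    refine Submodule.iSup_induction
      (motive := fun x => ∀ y : p, F (P.bracket x y) = P'.bracket (F x) (F y)) _ (hmemTop x)
      ?_ (by simp) ?_ y
    · intro i x hx y
      refine Submodule.iSup_induction
        (motive := fun y => F (P.bracket x y) = P'.bracket (F x) (F y)) _ (hmemTop y)
        (fun j y hy => core i x hx j y hy) (by simp) ?_
      intro a b ha hb
      simp [map_add, ha, hb]
    · intro a b ha hb y
      simp [map_add, ha y, hb y]
  refine ⟨F, ⟨⟨hFmem, hbr⟩, hcomp⟩, ?_⟩
  rintro f ⟨⟨hfmem, hfbr⟩, hfcomp⟩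
  have hfπ : ∀ x : p, π' (f x) = φ (π x) := fun x => LinearMap.congr_fun hfcomp x
  ext x
  refine Submodule.iSup_induction (motive := fun x => f x = F x) _ (hmemTop x) ?_ (by simp) ?_
  · intro s x hx
    refine (hcov'.2 s).injOn (hfmem s x hx) (hFmem s x hx) ?_
    show π' (f x) = π' (F x)
    rw [hfπ, hπ'F s x hx]
  · intro a b ha hb
    simp [map_add, ha, hb]
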